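/- Let H ∈ (0, 1/2), let r ∈ (1, (H+1/2)^{−1}), let q := r/(r−1), and let c : ℝ → ℝ be measurable with ‖c‖_{L^q(ℝ)} < ∞. Then there exists a constant C > 0, depending only on H, r and ‖c‖_{L^q(ℝ)}, such that for all T ≥ 1: (1/T²)·∫₁^{T} ∫_{t₁−1}^{t₁} ( ∫₀^{t₁} ∫₀^{t₂} (t₁−s₁)^{−H−1/2}(t₂−s₂)^{−H−1/2} |c(s₁−s₂)| ds₂ ds₁ )² dt₂ dt₁ ≤ C·T^{2/r − (4H+1)}. -/

import Mathlib

open Real MeasureTheory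


private lemma J_le {H r q : ℝ} (hH : H ∈ Set.Ioo (0:ℝ) (1/2))
    (hr : r ∈ Set.Ioo (1:ℝ) (H + 1/2)⁻¹) (hq : q = r/(r-1))
    {c : ℝ → ℝ} (hc : Measurable c)
    (hLq : eLpNorm c (ENNReal.ofReal q) volume < ⊤)
    (s₁ t₂ : ℝ) (ht₂ : 0 ≤ t₂) :
    ∫ s₂ in (0:ℝ)..t₂, (t₂ - s₂) ^ (-H - 1/2) * |c (s₁ - s₂)| ≤
      (t₂ ^ (1 - r * (H + 1/2)) / (1 - r * (H + 1/2))) ^ (1/r) *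
        (eLpNorm c (ENNReal.ofReal q) volume).toReal := by
  obtain ⟨hH0, hH2⟩ := hH
  obtain ⟨hr1, hr2⟩ := hr
  have hα : (0:ℝ) < H + 1/2 := by linarith
  have hrα : r * (H + 1/2) < 1 := by
    have h := mul_lt_mul_of_pos_right hr2 hα
    rwa [inv_mul_cancel₀ hα.ne'] at h
  have hβ : (0:ℝ) < 1 - r * (H + 1/2) := by linarith
  have hee : (-1:ℝ) < (-H - 1/2) * r := by nlinarith
  have hpq : r.HolderConjugate q := (Real.holderConjugate_iff_eq_conjExponent hr1).mpr hq
  have hq0 : 0 < q := hpq.symm.pos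
  have hr0 : 0 < r := hpq.pos
  have hmeasK : Measurable fun s₂ : ℝ => (t₂ - s₂) ^ (-H - 1/2) :=
    (measurable_const.sub measurable_id).pow_const _
  have hmeasC : Measurable fun s₂ : ℝ => |c (s₁ - s₂)| :=
    (hc.comp (measurable_const.sub measurable_id)).abs
  have hnn : 0 ≤ᵐ[volume.restrict (Set.Ioc 0 t₂)]
      fun s₂ => (t₂ - s₂) ^ (-H - 1/2) * |c (s₁ - s₂)| := by
    filter_upwards [ae_restrict_mem measurableSet_Ioc] with x hx
    exact mul_nonneg (Real.rpow_nonneg (by linarith [hx.2]) _) (abs_nonneg _)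
  rw [intervalIntegral.integral_of_le ht₂,
    MeasureTheory.integral_eq_lintegral_of_nonneg_ae hnn
      ((hmeasK.mul hmeasC).aestronglyMeasurable)]
  set F : ℝ → ENNReal := fun s₂ => ENNReal.ofReal ((t₂ - s₂) ^ (-H - 1/2)) with hF_def
  set G : ℝ → ENNReal := fun s₂ => ENNReal.ofReal |c (s₁ - s₂)| with hG_def
  have hsplit : (∫⁻ a in Set.Ioc 0 t₂,
      ENNReal.ofReal ((t₂ - a) ^ (-H - 1/2) * |c (s₁ - a)|)) =
      ∫⁻ a in Set.Ioc 0 t₂, (F * G) a := by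
    refine lintegral_congr_ae ?_
    filter_upwards [ae_restrict_mem measurableSet_Ioc] with x hx
    simp only [Pi.mul_apply, hF_def, hG_def]
    rw [ENNReal.ofReal_mul (Real.rpow_nonneg (by linarith [hx.2]) _)]
  have hholder := ENNReal.lintegral_mul_le_Lp_mul_Lq (volume.restrict (Set.Ioc 0 t₂)) hpq
    (hmeasK.ennreal_ofReal.aemeasurable) (hmeasC.ennreal_ofReal.aemeasurable)
  -- factor 1
  have hF1 : (∫⁻ a in Set.Ioc 0 t₂, F a ^ r) =
      ENNReal.ofReal (t₂ ^ (1 - r * (H + 1/2)) / (1 - r * (H + 1/2))) := by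
    have h1 : (∫⁻ a in Set.Ioc 0 t₂, F a ^ r) =
        ∫⁻ a in Set.Ioc 0 t₂, ENNReal.ofReal ((t₂ - a) ^ ((-H - 1/2) * r)) := by
      refine lintegral_congr_ae ?_
      filter_upwards [ae_restrict_mem measurableSet_Ioc] with x hx
      have hx0 : (0:ℝ) ≤ t₂ - x := by linarith [hx.2]
      simp only [hF_def]
      rw [ENNReal.ofReal_rpow_of_nonneg (Real.rpow_nonneg hx0 _) hr0.le,
        ← Real.rpow_mul hx0]
    have hint : IntegrableOn (fun a => (t₂ - a) ^ ((-H - 1/2) * r)) (Set.Ioc 0 t₂) volume := by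
      have h2 : IntervalIntegrable (fun u : ℝ => u ^ ((-H - 1/2) * r)) volume 0 t₂ :=
        intervalIntegral.intervalIntegrable_rpow' hee
      have h3 := h2.comp_sub_left t₂
      simp only [sub_zero, sub_self] at h3
      exact (intervalIntegrable_iff_integrableOn_Ioc_of_le ht₂).mp h3.symm
    have hnn2 : 0 ≤ᵐ[volume.restrict (Set.Ioc 0 t₂)]
        fun a => (t₂ - a) ^ ((-H - 1/2) * r) := by
      filter_upwards [ae_restrict_mem measurableSet_Ioc] with x hx
      exact Real.rpow_nonneg (by linarith [hx.2]) _
    rw [h1, ← MeasureTheory.ofReal_integral_eq_lintegral_ofReal hint hnn2]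
    congr 1
    rw [← intervalIntegral.integral_of_le ht₂]
    have h4 := intervalIntegral.integral_comp_sub_left (a := 0) (b := t₂)
      (fun u : ℝ => u ^ ((-H - 1/2) * r)) t₂
    simp only [sub_zero, sub_self] at h4
    rw [h4, integral_rpow (Or.inl hee), Real.zero_rpow (by linarith : (-H - 1/2) * r + 1 ≠ 0)]
    have h5 : (-H - 1/2) * r + 1 = 1 - r * (H + 1/2) := by ring
    rw [h5, sub_zero]
  -- factor 2
  have hG1 : (∫⁻ a in Set.Ioc 0 t₂, G a ^ q) ^ (1/q) ≤
      eLpNorm c (ENNReal.ofReal q) volume := by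
    have hmono : (∫⁻ a in Set.Ioc 0 t₂, G a ^ q) ≤ ∫⁻ a, G a ^ q :=
      lintegral_mono' Measure.restrict_le_self le_rfl
    have hmp := Measure.measurePreserving_sub_left (volume : Measure ℝ) s₁
    have hcomp : (∫⁻ a, G a ^ q) = ∫⁻ x, ENNReal.ofReal |c x| ^ q :=
      hmp.lintegral_comp ((hc.abs.ennreal_ofReal).pow_const q)
    have hsn : eLpNorm c (ENNReal.ofReal q) volume =
        (∫⁻ x, ENNReal.ofReal |c x| ^ q) ^ (1/q) := by
      rw [MeasureTheory.eLpNorm_eq_lintegral_rpow_enorm_toReal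
        (by simp [ENNReal.ofReal_eq_zero]; linarith) ENNReal.ofReal_ne_top]
      simp only [ENNReal.toReal_ofReal hq0.le]
      congr 1
      refine lintegral_congr fun x => ?_
      rw [Real.enorm_eq_ofReal_abs]
    calc (∫⁻ a in Set.Ioc 0 t₂, G a ^ q) ^ (1/q)
        ≤ (∫⁻ x, ENNReal.ofReal |c x| ^ q) ^ (1/q) :=
          ENNReal.rpow_le_rpow (hmono.trans_eq hcomp) (by positivity)
      _ = eLpNorm c (ENNReal.ofReal q) volume := hsn.symm
  have hbase : (0:ℝ) ≤ t₂ ^ (1 - r * (H + 1/2)) / (1 - r * (H + 1/2)) :=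
    div_nonneg (Real.rpow_nonneg ht₂ _) hβ.le
  have hLle : (∫⁻ a in Set.Ioc 0 t₂,
      ENNReal.ofReal ((t₂ - a) ^ (-H - 1/2) * |c (s₁ - a)|)) ≤
      ENNReal.ofReal ((t₂ ^ (1 - r * (H + 1/2)) / (1 - r * (H + 1/2))) ^ (1/r)) *
        eLpNorm c (ENNReal.ofReal q) volume := by
    rw [hsplit]
    refine hholder.trans ?_
    rw [hF1]
    refine mul_le_mul' ?_ hG1
    rw [ENNReal.ofReal_rpow_of_nonneg hbase (by positivity)]
  refine le_trans (ENNReal.toReal_mono ?_ hLle) ?_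
  · exact ENNReal.mul_ne_top ENNReal.ofReal_ne_top hLq.ne
  · rw [ENNReal.toReal_mul, ENNReal.toReal_ofReal (by positivity)]

private lemma integral_mono_on'' {f g : ℝ → ℝ} {a b : ℝ} (hab : a ≤ b)
    (hf : ∀ x ∈ Set.Icc a b, 0 ≤ f x) (hfg : ∀ x ∈ Set.Icc a b, f x ≤ g x)
    (hg : IntervalIntegrable g volume a b) :
    ∫ x in a..b, f x ≤ ∫ x in a..b, g x := by
  by_cases h : IntervalIntegrable f volume a b
  · exact intervalIntegral.integral_mono_on hab h hg hfg
  · rw [intervalIntegral.integral_undef h]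
    exact intervalIntegral.integral_nonneg hab fun x hx => (hf x hx).trans (hfg x hx)

private lemma inner_le {H r q : ℝ} (hH : H ∈ Set.Ioo (0:ℝ) (1/2))
    (hr : r ∈ Set.Ioo (1:ℝ) (H + 1/2)⁻¹) (hq : q = r/(r-1))
    {c : ℝ → ℝ} (hc : Measurable c)
    (hLq : eLpNorm c (ENNReal.ofReal q) volume < ⊤)
    (t₁ t₂ : ℝ) (ht₁ : 1 ≤ t₁) (ht₂ : t₂ ∈ Set.Icc (t₁ - 1) t₁) :
    (∫ s₁ in (0:ℝ)..t₁, ∫ s₂ in (0:ℝ)..t₂,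
        (t₁ - s₁) ^ (-H - 1/2) * (t₂ - s₂) ^ (-H - 1/2) * |c (s₁ - s₂)|) ≤
      ((1 / (1 - r * (H + 1/2))) ^ (1/r) *
          (eLpNorm c (ENNReal.ofReal q) volume).toReal / (1/2 - H)) * t₁ ^ (1/r - 2*H) := by
  obtain ⟨hH0, hH2⟩ := hH
  obtain ⟨hr1, hr2⟩ := hr
  have hα : (0:ℝ) < H + 1/2 := by linarith
  have hrα : r * (H + 1/2) < 1 := by
    have h := mul_lt_mul_of_pos_right hr2 hα
    rwa [inv_mul_cancel₀ hα.ne'] at h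
  have hβ : (0:ℝ) < 1 - r * (H + 1/2) := by linarith
  have hr0 : (0:ℝ) < r := by linarith
  have ht₁0 : (0:ℝ) < t₁ := by linarith
  have ht₂0 : (0:ℝ) ≤ t₂ := by linarith [ht₂.1]
  have hE : (-1:ℝ) < -H - 1/2 := by linarith
  set N := (eLpNorm c (ENNReal.ofReal q) volume).toReal with hN_def
  have hN0 : 0 ≤ N := ENNReal.toReal_nonneg
  set K := (t₁ ^ (1 - r * (H + 1/2)) / (1 - r * (H + 1/2))) ^ (1/r) * N with hK_def
  have hK0 : 0 ≤ K := by
    apply mul_nonneg _ hN0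
    exact Real.rpow_nonneg (div_nonneg (Real.rpow_nonneg ht₁0.le _) hβ.le) _
  have step1 : (∫ s₁ in (0:ℝ)..t₁, ∫ s₂ in (0:ℝ)..t₂,
      (t₁ - s₁) ^ (-H - 1/2) * (t₂ - s₂) ^ (-H - 1/2) * |c (s₁ - s₂)|) ≤
      ∫ s₁ in (0:ℝ)..t₁, (t₁ - s₁) ^ (-H - 1/2) * K := by
    refine integral_mono_on'' (by linarith) ?_ ?_ ?_
    · intro s₁ hs₁
      refine intervalIntegral.integral_nonneg ht₂0 fun x hx => ?_
      have h1 : (0:ℝ) ≤ t₁ - s₁ := by linarith [hs₁.2]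
      have h2 : (0:ℝ) ≤ t₂ - x := by linarith [hx.2]
      exact mul_nonneg (mul_nonneg (Real.rpow_nonneg h1 _) (Real.rpow_nonneg h2 _)) (abs_nonneg _)
    · intro s₁ hs₁
      have h1 : (0:ℝ) ≤ t₁ - s₁ := by linarith [hs₁.2]
      have hfac : (∫ s₂ in (0:ℝ)..t₂,
          (t₁ - s₁) ^ (-H - 1/2) * (t₂ - s₂) ^ (-H - 1/2) * |c (s₁ - s₂)|) =
          (t₁ - s₁) ^ (-H - 1/2) *
            ∫ s₂ in (0:ℝ)..t₂, (t₂ - s₂) ^ (-H - 1/2) * |c (s₁ - s₂)| := by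
        simp only [mul_assoc]
        exact intervalIntegral.integral_const_mul _ _
      rw [hfac]
      refine mul_le_mul_of_nonneg_left ?_ (Real.rpow_nonneg h1 _)
      refine (J_le ⟨hH0, hH2⟩ ⟨hr1, hr2⟩ hq hc hLq s₁ t₂ ht₂0).trans ?_
      rw [hK_def]
      refine mul_le_mul_of_nonneg_right ?_ hN0
      refine Real.rpow_le_rpow (div_nonneg (Real.rpow_nonneg ht₂0 _) hβ.le) ?_
        (by positivity)
      have hpow : t₂ ^ (1 - r * (H + 1/2)) ≤ t₁ ^ (1 - r * (H + 1/2)) :=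
        Real.rpow_le_rpow ht₂0 ht₂.2 hβ.le
      gcongr
    · have h2 : IntervalIntegrable (fun u : ℝ => u ^ (-H - 1/2)) volume 0 t₁ :=
        intervalIntegral.intervalIntegrable_rpow' hE
      have h3 := h2.comp_sub_left t₁
      simp only [sub_zero, sub_self] at h3
      exact h3.symm.mul_const K
  refine step1.trans ?_
  rw [intervalIntegral.integral_mul_const]
  have h4 := intervalIntegral.integral_comp_sub_left (a := 0) (b := t₁)
    (fun u : ℝ => u ^ (-H - 1/2)) t₁
  simp only [sub_zero, sub_self] at h4
  rw [h4, integral_rpow (Or.inl hE), Real.zero_rpow (by linarith : -H - 1/2 + 1 ≠ 0), sub_zero]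
  rw [hK_def]
  have hexp : -H - 1/2 + 1 = 1/2 - H := by ring
  rw [hexp]
  -- now pure rpow algebra
  rw [Real.div_rpow (Real.rpow_nonneg ht₁0.le _) hβ.le, ← Real.rpow_mul ht₁0.le,
    Real.div_rpow zero_le_one hβ.le, Real.one_rpow]
  rw [show (1:ℝ)/r - 2*H = (1/2 - H) + (1 - r * (H + 1/2)) * (1/r) by field_simp; ring]
  rw [Real.rpow_add ht₁0]
  have hhalf : (0:ℝ) < 1/2 - H := by linarith
  apply le_of_eq
  field_simp

private lemma F_le {H r q : ℝ} (hH : H ∈ Set.Ioo (0:ℝ) (1/2))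
    (hr : r ∈ Set.Ioo (1:ℝ) (H + 1/2)⁻¹) (hq : q = r/(r-1))
    {c : ℝ → ℝ} (hc : Measurable c)
    (hLq : eLpNorm c (ENNReal.ofReal q) volume < ⊤)
    (t₁ : ℝ) (ht₁ : 1 ≤ t₁) :
    (∫ t₂ in (t₁ - 1)..t₁, (∫ s₁ in (0:ℝ)..t₁, ∫ s₂ in (0:ℝ)..t₂,
        (t₁ - s₁) ^ (-H - 1/2) * (t₂ - s₂) ^ (-H - 1/2) * |c (s₁ - s₂)|) ^ 2) ≤
      ((1 / (1 - r * (H + 1/2))) ^ (1/r) *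
          (eLpNorm c (ENNReal.ofReal q) volume).toReal / (1/2 - H)) ^ 2 *
        t₁ ^ (2 * (1/r - 2*H)) := by
  obtain ⟨hH0, hH2⟩ := hH
  obtain ⟨hr1, hr2⟩ := hr
  have hα : (0:ℝ) < H + 1/2 := by linarith
  have hrα : r * (H + 1/2) < 1 := by
    have h := mul_lt_mul_of_pos_right hr2 hα
    rwa [inv_mul_cancel₀ hα.ne'] at h
  have hβ : (0:ℝ) < 1 - r * (H + 1/2) := by linarith
  have ht₁0 : (0:ℝ) < t₁ := by linarith
  set D := (1 / (1 - r * (H + 1/2))) ^ (1/r) *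
      (eLpNorm c (ENNReal.ofReal q) volume).toReal / (1/2 - H) with hD_def
  have hD0 : 0 ≤ D := by
    rw [hD_def]
    apply div_nonneg _ (by linarith : (0:ℝ) ≤ 1/2 - H)
    exact mul_nonneg (Real.rpow_nonneg (by positivity) _) ENNReal.toReal_nonneg
  have key : (∫ t₂ in (t₁ - 1)..t₁, (∫ s₁ in (0:ℝ)..t₁, ∫ s₂ in (0:ℝ)..t₂,
      (t₁ - s₁) ^ (-H - 1/2) * (t₂ - s₂) ^ (-H - 1/2) * |c (s₁ - s₂)|) ^ 2) ≤
      ∫ _ in (t₁ - 1)..t₁, (D * t₁ ^ (1/r - 2*H)) ^ 2 := by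
    refine integral_mono_on'' (by linarith) (fun x _ => sq_nonneg _) ?_
      intervalIntegrable_const
    intro t₂ ht₂
    have hinner0 : 0 ≤ ∫ s₁ in (0:ℝ)..t₁, ∫ s₂ in (0:ℝ)..t₂,
        (t₁ - s₁) ^ (-H - 1/2) * (t₂ - s₂) ^ (-H - 1/2) * |c (s₁ - s₂)| := by
      refine intervalIntegral.integral_nonneg (by linarith) fun s₁ hs₁ => ?_
      refine intervalIntegral.integral_nonneg (by linarith [ht₂.1]) fun x hx => ?_
      have h1 : (0:ℝ) ≤ t₁ - s₁ := by linarith [hs₁.2]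
      have h2 : (0:ℝ) ≤ t₂ - x := by linarith [hx.2]
      exact mul_nonneg (mul_nonneg (Real.rpow_nonneg h1 _) (Real.rpow_nonneg h2 _))
        (abs_nonneg _)
    exact pow_le_pow_left₀ hinner0 (inner_le ⟨hH0, hH2⟩ ⟨hr1, hr2⟩ hq hc hLq t₁ t₂ ht₁ ht₂) 2
  refine key.trans ?_
  rw [intervalIntegral.integral_const, smul_eq_mul]
  have : t₁ - (t₁ - 1) = 1 := by ring
  rw [this, one_mul, mul_pow]
  have hpow2 : (t₁ ^ (1/r - 2*H)) ^ 2 = t₁ ^ (2 * (1/r - 2*H)) := by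
    rw [← Real.rpow_natCast (t₁ ^ (1/r - 2*H)) 2, ← Real.rpow_mul ht₁0.le]
    norm_num
    ring_nf
  rw [hpow2]

/-- Bound for the term `I₃(T)`: for `H ∈ (0,1/2)`, `r ∈ (1,(H+1/2)⁻¹)`, `q = r/(r-1)` and
`c ∈ L^q(ℝ)`, there is `C > 0` such that for all `T ≥ 1`,
`(1/T²) ∫₁^T ∫_{t₁-1}^{t₁} (∫₀^{t₁}∫₀^{t₂} (t₁-s₁)^{-H-1/2}(t₂-s₂)^{-H-1/2}|c(s₁-s₂)| ds₂ ds₁)² dt₂ dt₁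
  ≤ C T^{2/r - (4H+1)}`. -/
theorem stmt_8 (H r q : ℝ) (hH : H ∈ Set.Ioo (0 : ℝ) (1/2))
    (hr : r ∈ Set.Ioo (1 : ℝ) (H + 1/2)⁻¹) (hq : q = r / (r - 1))
    (c : ℝ → ℝ) (hc : Measurable c)
    (hLq : eLpNorm c (ENNReal.ofReal q) volume < ⊤) :
    ∃ C > 0, ∀ T ≥ (1 : ℝ),
      (1 / T ^ 2) * ∫ t₁ in (1 : ℝ)..T, ∫ t₂ in (t₁ - 1)..t₁,
          (∫ s₁ in (0 : ℝ)..t₁, ∫ s₂ in (0 : ℝ)..t₂,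
            (t₁ - s₁) ^ (-H - 1/2) * (t₂ - s₂) ^ (-H - 1/2) * |c (s₁ - s₂)|) ^ 2 ≤
        C * T ^ (2/r - (4*H + 1)) := by
  obtain ⟨hH0, hH2⟩ := hH
  obtain ⟨hr1, hr2⟩ := hr
  have hα : (0:ℝ) < H + 1/2 := by linarith
  have hrα : r * (H + 1/2) < 1 := by
    have h := mul_lt_mul_of_pos_right hr2 hα
    rwa [inv_mul_cancel₀ hα.ne'] at h
  have hr0 : (0:ℝ) < r := by linarith
  have hinvr : H + 1/2 < 1/r := by
    rw [lt_div_iff₀ hr0]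
    linarith [hrα]
  set D := (1 / (1 - r * (H + 1/2))) ^ (1/r) *
      (eLpNorm c (ENNReal.ofReal q) volume).toReal / (1/2 - H) with hD_def
  set e := 2 * (1/r - 2*H) with he_def
  have he1 : (0:ℝ) < e + 1 := by
    rw [he_def]; nlinarith
  have heneg : (-1:ℝ) < e := by linarith
  refine ⟨D ^ 2 / (e + 1) + 1, by positivity, fun T hT => ?_⟩
  have hT0 : (0:ℝ) < T := by linarith
  have step1 : (∫ t₁ in (1:ℝ)..T, ∫ t₂ in (t₁ - 1)..t₁,
      (∫ s₁ in (0:ℝ)..t₁, ∫ s₂ in (0:ℝ)..t₂,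
        (t₁ - s₁) ^ (-H - 1/2) * (t₂ - s₂) ^ (-H - 1/2) * |c (s₁ - s₂)|) ^ 2) ≤
      ∫ t₁ in (1:ℝ)..T, D ^ 2 * t₁ ^ e := by
    refine integral_mono_on'' hT ?_ ?_ ?_
    · intro t₁ ht₁
      exact intervalIntegral.integral_nonneg (by linarith) fun x _ => sq_nonneg _
    · intro t₁ ht₁
      exact F_le ⟨hH0, hH2⟩ ⟨hr1, hr2⟩ hq hc hLq t₁ ht₁.1
    · exact (intervalIntegral.intervalIntegrable_rpow' heneg).const_mul _
  have step2 : (∫ t₁ in (1:ℝ)..T, D ^ 2 * t₁ ^ e) ≤ D ^ 2 * (T ^ (e + 1) / (e + 1)) := by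
    rw [intervalIntegral.integral_const_mul, integral_rpow (Or.inl heneg), Real.one_rpow]
    gcongr
    linarith [Real.rpow_nonneg hT0.le (e+1)]
  have hmul : (0:ℝ) ≤ 1 / T ^ 2 := by positivity
  calc (1 / T ^ 2) * ∫ t₁ in (1 : ℝ)..T, ∫ t₂ in (t₁ - 1)..t₁,
          (∫ s₁ in (0 : ℝ)..t₁, ∫ s₂ in (0 : ℝ)..t₂,
            (t₁ - s₁) ^ (-H - 1/2) * (t₂ - s₂) ^ (-H - 1/2) * |c (s₁ - s₂)|) ^ 2
      ≤ (1 / T ^ 2) * (D ^ 2 * (T ^ (e + 1) / (e + 1))) :=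
        mul_le_mul_of_nonneg_left (step1.trans step2) hmul
    _ = (D ^ 2 / (e + 1)) * (T ^ (e + 1) / T ^ (2:ℝ)) := by
        rw [Real.rpow_two]
        ring
    _ = (D ^ 2 / (e + 1)) * T ^ (e + 1 - 2) := by
        rw [Real.rpow_sub hT0]
    _ = (D ^ 2 / (e + 1)) * T ^ (2/r - (4*H + 1)) := by
        rw [show e + 1 - 2 = 2/r - (4*H + 1) by rw [he_def]; ring]
    _ ≤ (D ^ 2 / (e + 1) + 1) * T ^ (2/r - (4*H + 1)) := by
        have := Real.rpow_pos_of_pos hT0 (2/r - (4*H + 1))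
        nlinarith
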